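/- Let v_1, …, v_d ∈ ℕ^n (nonnegative integer vectors) be linearly independent over ℚ. In the ring of multivariate formal power series in n variables over ℚ, let φ be the power series whose coefficient of X^w is 1 if w ∈ ℤ^n ∩ cone_ℝ(v_1,…,v_d) and 0 otherwise. Then (1 − X^{v_1})·…·(1 − X^{v_d}) · φ = Σ_{w ∈ ℤ^n ∩ Π(v_1,…,v_d)} X^w. -/

import Mathlib

/-- The indicator multivariate formal power series of a set of exponent vectors:
`Σ_{w ∈ S} X^w`. -/
noncomputable def indicatorSeries (n : ℕ) (S : Set (Fin n →₀ ℕ)) :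
    MvPowerSeries (Fin n) ℚ :=
  fun w => S.indicator 1 w

/-- The real cone generated by the vectors `v i`. -/
def coneR {n d : ℕ} (v : Fin d → (Fin n → ℕ)) : Set (Fin n → ℝ) :=
  {y | ∃ lam : Fin d → ℝ, (∀ i, 0 ≤ lam i) ∧ y = ∑ i, lam i • (fun j => (v i j : ℝ))}

/-- The (half-open) fundamental parallelepiped of the vectors `v i`. -/
def fundPar {n d : ℕ} (v : Fin d → (Fin n → ℕ)) : Set (Fin n → ℝ) :=
  {y | ∃ lam : Fin d → ℝ, (∀ i, 0 ≤ lam i ∧ lam i < 1) ∧ y = ∑ i, lam i • (fun j => (v i j : ℝ))}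

open Matrix in
/-- Linear independence over `ℚ` of rational vectors implies linear independence over `ℝ`. -/
lemma li_real {n d : ℕ} (v : Fin d → (Fin n → ℕ))
    (hli : LinearIndependent ℚ (fun i => fun j => (v i j : ℚ))) :
    LinearIndependent ℝ (fun i => fun j => (v i j : ℝ)) := by
  classical
  set A : Matrix (Fin n) (Fin d) ℚ := Matrix.of (fun j i => (v i j : ℚ)) with hA
  have hinj : Function.Injective A.mulVec := by
    rw [Matrix.mulVec_injective_iff]
    exact hli
  have hker : LinearMap.ker (Matrix.toLin' A) = ⊥ := by
    rw [LinearMap.ker_eq_bot]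
    intro x y hxy
    exact hinj (by simpa [Matrix.toLin'_apply] using hxy)
  obtain ⟨g, hg⟩ := (Matrix.toLin' A).exists_leftInverse_of_injective hker
  set B : Matrix (Fin d) (Fin n) ℚ := LinearMap.toMatrix' g with hB
  have hBA : B * A = 1 := by
    have h := congrArg LinearMap.toMatrix' hg
    rwa [LinearMap.toMatrix'_comp, LinearMap.toMatrix'_toLin', LinearMap.toMatrix'_id] at h
  set f : ℚ →+* ℝ := algebraMap ℚ ℝ with hf
  have hBA' : B.map f * A.map f = 1 := by
    rw [← Matrix.map_mul, hBA, Matrix.map_one f (map_zero f) (map_one f)]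
  have hinjR : Function.Injective (A.map f).mulVec := by
    intro c c' h
    have h2 := congrArg ((B.map f).mulVec) h
    simp only [Matrix.mulVec_mulVec, hBA', Matrix.one_mulVec] at h2
    exact h2
  have hres := Matrix.mulVec_injective_iff.mp hinjR
  exact hres

/-- The rational function identity for a simplicial cone: the generating function `φ` of the
integer points of the real cone generated by linearly independent nonnegative integer vectors
satisfies `(1 - X^{v 1})·…·(1 - X^{v d}) · φ = Σ_{w ∈ ℤ^n ∩ Π(v)} X^w`. -/
theorem simplicial_cone_generating_function
    (n d : ℕ) (v : Fin d → (Fin n → ℕ))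
    (hli : LinearIndependent ℚ (fun i => fun j => (v i j : ℚ))) :
    (∏ i, (1 - MvPowerSeries.monomial (R := ℚ) (Finsupp.equivFunOnFinite.symm (v i)) 1)) *
        indicatorSeries n {w | (fun j => (w j : ℝ)) ∈ coneR v} =
      indicatorSeries n {w | (fun j => (w j : ℝ)) ∈ fundPar v} := by
  classical
  have hliR := li_real v hli
  -- coordinates of a sum of scaled vectors
  have hVRapp : ∀ (c : Fin d → ℝ) (j : Fin n),
      (∑ i, c i • (fun j' => (v i j' : ℝ))) j = ∑ i, c i * (v i j : ℝ) := by
    intro c j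
    rw [Finset.sum_apply]
    rfl
  -- uniqueness of the coefficients
  have huniq : ∀ lam mu : Fin d → ℝ,
      (∑ i, lam i • (fun j => (v i j : ℝ))) = (∑ i, mu i • (fun j => (v i j : ℝ))) → lam = mu := by
    intro lam mu h
    have h2 : ∑ i, (lam i - mu i) • (fun j => (v i j : ℝ)) = 0 := by
      simp only [sub_smul, Finset.sum_sub_distrib, h, sub_self]
    have h3 := Fintype.linearIndependent_iff.mp hliR (fun i => lam i - mu i) h2
    funext i
    have h4 := h3 i
    have : lam i - mu i = 0 := h4
    linarith
  set E : Fin d → (Fin n →₀ ℕ) := fun i => Finsupp.equivFunOnFinite.symm (v i) with hE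
  have hEapp : ∀ i j, E i j = v i j := fun i j => rfl
  have hsumE : ∀ (S : Finset (Fin d)) (j : Fin n), ((∑ i ∈ S, E i) j : ℕ) = ∑ i ∈ S, v i j := by
    intro S j
    rw [Finset.sum_apply']
    exact Finset.sum_congr rfl fun i _ => hEapp i j
  -- expansion of the product as a sum of monomials
  have hprodneg : ∀ S : Finset (Fin d),
      (∏ i ∈ S, -(MvPowerSeries.monomial (R := ℚ) (E i) (1:ℚ)))
        = MvPowerSeries.monomial (R := ℚ) (∑ i ∈ S, E i) ((-1)^S.card) := by
    intro S
    induction S using Finset.induction_on with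
    | empty => simp
    | @insert a S ha ih =>
      rw [Finset.prod_insert ha, ih, neg_mul, MvPowerSeries.monomial_mul_monomial, one_mul,
        ← map_neg, Finset.sum_insert ha, Finset.card_insert_of_notMem ha]
      congr 1
      ring
  have hexp : (∏ i, ((1 : MvPowerSeries (Fin n) ℚ) - MvPowerSeries.monomial (R := ℚ) (E i) 1))
      = ∑ S ∈ Finset.univ.powerset,
          MvPowerSeries.monomial (R := ℚ) (∑ i ∈ S, E i) ((-1)^S.card) := by
    have h1 : ∀ i : Fin d, (1 : MvPowerSeries (Fin n) ℚ) - MvPowerSeries.monomial (R := ℚ) (E i) 1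
        = -(MvPowerSeries.monomial (R := ℚ) (E i) 1) + 1 := fun i => by ring
    rw [Finset.prod_congr rfl fun i _ => h1 i, Finset.prod_add]
    refine Finset.sum_congr rfl fun S _ => ?_
    rw [Finset.prod_const_one, mul_one, hprodneg S]
  refine MvPowerSeries.ext fun w => ?_
  rw [hexp, Finset.sum_mul, map_sum]
  set wR : Fin n → ℝ := fun j => (w j : ℝ) with hwR
  -- real coordinates after truncated subtraction
  have hkey : ∀ S : Finset (Fin d), (∑ i ∈ S, E i) ≤ w →
      (fun j => (((w - ∑ i ∈ S, E i) : Fin n →₀ ℕ) j : ℝ))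
        = fun j => wR j - ∑ i ∈ S, (v i j : ℝ) := by
    intro S hle
    funext j
    rw [Finsupp.tsub_apply, Nat.cast_sub (hle j), hsumE S j]
    push_cast
    rfl
  -- characteristic sum over a subset
  have hchi : ∀ (S : Finset (Fin d)) (j : Fin n),
      (∑ i, (if i ∈ S then (1:ℝ) else 0) * (v i j : ℝ)) = ∑ i ∈ S, (v i j : ℝ) := by
    intro S j
    rw [show (∑ i, (if i ∈ S then (1:ℝ) else 0) * (v i j : ℝ))
        = ∑ i, (if i ∈ S then (v i j : ℝ) else 0) from
      Finset.sum_congr rfl fun i _ => by by_cases h : i ∈ S <;> simp [h]]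
    rw [Finset.sum_ite_mem, Finset.univ_inter]
  -- lifting a cone representation of `w - e_S` to one of `w`
  have hlift : ∀ (S : Finset (Fin d)) (mu : Fin d → ℝ), (∑ i ∈ S, E i) ≤ w →
      ((fun j => (((w - ∑ i ∈ S, E i) : Fin n →₀ ℕ) j : ℝ))
        = ∑ i, mu i • (fun j => (v i j : ℝ))) →
      wR = ∑ k, (mu k + if k ∈ S then (1:ℝ) else 0) • (fun j => (v k j : ℝ)) := by
    intro S mu hle hmueq
    rw [hkey S hle] at hmueq
    funext j
    have h2 := congrFun hmueq j
    rw [hVRapp] at h2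
    rw [hVRapp]
    simp only [add_mul]
    rw [Finset.sum_add_distrib, ← h2, hchi S j]
    ring
  -- the coefficient of each term
  have hterm : ∀ S ∈ (Finset.univ : Finset (Fin d)).powerset,
      (MvPowerSeries.coeff (R := ℚ) w)
          (MvPowerSeries.monomial (R := ℚ) (∑ i ∈ S, E i) ((-1 : ℚ)^S.card) *
            indicatorSeries n {u | (fun j => (u j : ℝ)) ∈ coneR v})
        = if ((∑ i ∈ S, E i) ≤ w ∧
              (fun j => (((w - ∑ i ∈ S, E i) : Fin n →₀ ℕ) j : ℝ)) ∈ coneR v)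
            then (-1 : ℚ)^S.card else 0 := by
    intro S _
    rw [MvPowerSeries.coeff_monomial_mul]
    by_cases h : (∑ i ∈ S, E i) ≤ w
    · have hcoe : (MvPowerSeries.coeff (R := ℚ) (w - ∑ i ∈ S, E i))
          (indicatorSeries n {u | (fun j => (u j : ℝ)) ∈ coneR v})
          = if ((fun j => (((w - ∑ i ∈ S, E i) : Fin n →₀ ℕ) j : ℝ)) ∈ coneR v)
              then 1 else 0 := by
        rw [MvPowerSeries.coeff_apply]
        simp [indicatorSeries, Set.indicator_apply]
      rw [if_pos h, hcoe]
      by_cases h2 : (fun j => (((w - ∑ i ∈ S, E i) : Fin n →₀ ℕ) j : ℝ)) ∈ coneR v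
      · rw [if_pos h2, if_pos ⟨h, h2⟩, mul_one]
      · rw [if_neg h2, if_neg (fun hc => h2 hc.2), mul_zero]
    · rw [if_neg h, if_neg (fun hc => h hc.1)]
  rw [Finset.sum_congr rfl hterm]
  have hrhscoe : (MvPowerSeries.coeff (R := ℚ) w)
      (indicatorSeries n {u | (fun j => (u j : ℝ)) ∈ fundPar v})
      = if (wR ∈ fundPar v) then 1 else 0 := by
    rw [MvPowerSeries.coeff_apply]
    simp [indicatorSeries, Set.indicator_apply, hwR]
  rw [hrhscoe]
  by_cases hw : wR ∈ coneR v
  · -- `w` is in the cone, with unique coefficients `lam`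
    obtain ⟨lam, hlam0, hlameq⟩ := hw
    set T : Finset (Fin d) := Finset.univ.filter (fun i => 1 ≤ lam i) with hT
    have hcond : ∀ S : Finset (Fin d),
        ((∑ i ∈ S, E i) ≤ w ∧
          (fun j => (((w - ∑ i ∈ S, E i) : Fin n →₀ ℕ) j : ℝ)) ∈ coneR v) ↔ S ⊆ T := by
      intro S
      constructor
      · rintro ⟨hle, mu, hmu0, hmueq⟩
        have heq := hlift S mu hle hmueq
        have hlam := huniq lam (fun k => mu k + if k ∈ S then (1:ℝ) else 0)
          (hlameq.symm.trans heq)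
        intro i hiS
        rw [hT, Finset.mem_filter]
        refine ⟨Finset.mem_univ i, ?_⟩
        have : lam i = mu i + if i ∈ S then (1:ℝ) else 0 := congrFun hlam i
        rw [if_pos hiS] at this
        have := hmu0 i
        linarith
      · intro hST
        set mu : Fin d → ℝ := fun k => lam k - if k ∈ S then (1:ℝ) else 0 with hmu
        have hmu0 : ∀ k, 0 ≤ mu k := by
          intro k
          simp only [hmu]
          by_cases hk : k ∈ S
          · have hkT : k ∈ T := hST hk
            rw [hT, Finset.mem_filter] at hkT
            rw [if_pos hk]
            linarith [hkT.2]
          · rw [if_neg hk]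
            simpa using hlam0 k
        have hwcoord : ∀ j, wR j = ∑ k, lam k * (v k j : ℝ) := by
          intro j
          have := congrFun hlameq j
          rwa [hVRapp] at this
        have hsubcoord : ∀ j, wR j - (∑ i ∈ S, (v i j : ℝ)) = ∑ k, mu k * (v k j : ℝ) := by
          intro j
          rw [hwcoord j, ← hchi S j, ← Finset.sum_sub_distrib]
          refine Finset.sum_congr rfl fun k _ => ?_
          simp only [hmu]
          ring
        have hle : (∑ i ∈ S, E i) ≤ w := by
          intro j
          rw [hsumE S j]
          have h1 : (0:ℝ) ≤ ∑ k, mu k * (v k j : ℝ) :=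
            Finset.sum_nonneg fun k _ => mul_nonneg (hmu0 k) (Nat.cast_nonneg _)
          rw [← hsubcoord j] at h1
          have h2 : ((∑ i ∈ S, v i j : ℕ) : ℝ) ≤ ((w j : ℕ) : ℝ) := by
            have hwj : wR j = ((w j : ℕ) : ℝ) := by rw [hwR]
            push_cast
            rw [← hwj]
            linarith
          exact_mod_cast h2
        refine ⟨hle, mu, hmu0, ?_⟩
        rw [hkey S hle]
        funext j
        rw [hVRapp]
        exact hsubcoord j
    have hterm2 : ∀ S ∈ (Finset.univ : Finset (Fin d)).powerset,
        (if ((∑ i ∈ S, E i) ≤ w ∧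
              (fun j => (((w - ∑ i ∈ S, E i) : Fin n →₀ ℕ) j : ℝ)) ∈ coneR v)
          then (-1 : ℚ)^S.card else 0)
        = if S ∈ T.powerset then (-1 : ℚ)^S.card else 0 := by
      intro S _
      exact if_congr ((hcond S).trans (Finset.mem_powerset).symm) rfl rfl
    rw [Finset.sum_congr rfl hterm2, Finset.sum_ite_mem,
      Finset.inter_eq_right.mpr (Finset.powerset_mono.mpr (Finset.subset_univ T))]
    have hps : (∑ m ∈ T.powerset, (-1:ℚ)^m.card) = if T = ∅ then 1 else 0 := by
      have hz := Finset.sum_powerset_neg_one_pow_card (x := T)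
      have : ((∑ m ∈ T.powerset, (-1:ℤ)^m.card : ℤ) : ℚ) = ∑ m ∈ T.powerset, (-1:ℚ)^m.card := by
        push_cast
        rfl
      rw [← this, hz]
      split <;> simp
    rw [hps]
    have hiff : wR ∈ fundPar v ↔ T = ∅ := by
      constructor
      · rintro ⟨lam', hlam', heq'⟩
        have h1 : lam' = lam := huniq lam' lam (heq'.symm.trans hlameq)
        rw [hT, Finset.filter_eq_empty_iff]
        intro i _
        rw [← h1]
        exact not_le.mpr (hlam' i).2
      · intro hTe
        have hlt : ∀ i, lam i < 1 := by
          intro i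
          by_contra hcon
          have : i ∈ T := by
            rw [hT, Finset.mem_filter]
            exact ⟨Finset.mem_univ i, not_lt.mp hcon⟩
          rw [hTe] at this
          exact absurd this (Finset.notMem_empty i)
        exact ⟨lam, fun i => ⟨hlam0 i, hlt i⟩, hlameq⟩
    by_cases hfp : wR ∈ fundPar v
    · rw [if_pos hfp, if_pos (hiff.mp hfp)]
    · rw [if_neg hfp, if_neg (fun h => hfp (hiff.mpr h))]
  · -- `w` is not in the cone: everything vanishes
    have hzero : ∀ S ∈ (Finset.univ : Finset (Fin d)).powerset,
        (if ((∑ i ∈ S, E i) ≤ w ∧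
              (fun j => (((w - ∑ i ∈ S, E i) : Fin n →₀ ℕ) j : ℝ)) ∈ coneR v)
          then (-1 : ℚ)^S.card else 0) = 0 := by
      intro S _
      rw [if_neg]
      rintro ⟨hle, mu, hmu0, hmueq⟩
      refine hw ⟨fun k => mu k + if k ∈ S then (1:ℝ) else 0,
        fun k => add_nonneg (hmu0 k) (by by_cases hk : k ∈ S <;> simp [hk]), ?_⟩
      exact hlift S mu hle hmueq
    have hnotpar : ¬ (wR ∈ fundPar v) := by
      rintro ⟨lam', hlam', heq'⟩
      exact hw ⟨lam', fun i => (hlam' i).1, heq'⟩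
    rw [Finset.sum_congr rfl hzero, Finset.sum_const_zero, if_neg hnotpar]
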